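/- Let Φ : X ⇒ Y be a multi-map (a relation Φ ⊆ X × Y) between metric spaces with Φ⁻¹(Y) = X (i.e., Φ(x) ≠ ∅ for all x). If δ ≥ 0 and ε ≥ ω_Φ(δ), where ω_Φ(δ) = sup{diam Φ(A) : A ⊆ X, diam A ≤ δ}, then for every x ∈ X and every y ∈ Φ(x), the image Φ(C_δ(x)) is contained in the ε-connected component C_ε(y). -/

import Mathlib

/-- The `s`-connected component of `x`. -/
def chainComp {X : Type*} [MetricSpace X] (s : ℝ) (x : X) : Set X :=
  {y | Relation.ReflTransGen (fun a b => dist a b ≤ s) x y}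

/-- The image of a set under a multi-map `Φ ⊆ X × Y`. -/
def mImage {X Y : Type*} (Φ : Set (X × Y)) (A : Set X) : Set Y :=
  {y | ∃ a ∈ A, (a, y) ∈ Φ}

private lemma chain_step {Y : Type*} [MetricSpace Y] {ε : ℝ} {y1 y2 : Y}
    (h : edist y1 y2 ≤ ENNReal.ofReal ε) :
    Relation.ReflTransGen (fun a b => dist a b ≤ ε) y1 y2 := by
  rcases eq_or_ne y1 y2 with rfl | hne
  · exact .refl
  · refine .single ?_
    have hpos : (0 : ENNReal) < edist y1 y2 := by simpa [edist_pos] using hne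
    have hε : 0 < ε := ENNReal.ofReal_pos.mp (lt_of_lt_of_le hpos h)
    rw [edist_dist] at h
    exact (ENNReal.ofReal_le_ofReal_iff hε.le).mp h

/-- Lemma 1: if `Φ : X ⇒ Y` is a multi-map with `Φ⁻¹(Y) = X`, `δ ≥ 0` and
`ε ≥ ω_Φ(δ)` (expressed by: every set of diameter at most `δ` has image of diameter
at most `ε`), then for every `x` and every `y ∈ Φ(x)`, the image of the `δ`-connected
component of `x` lies in the `ε`-connected component of `y`. -/
theorem multiMap_image_component_subset {X Y : Type*} [MetricSpace X] [MetricSpace Y]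
    (Φ : Set (X × Y)) (hdom : ∀ x : X, ∃ y : Y, (x, y) ∈ Φ)
    (δ ε : ℝ) (hδ : 0 ≤ δ)
    (hosc : ∀ A : Set X, EMetric.diam A ≤ ENNReal.ofReal δ →
      EMetric.diam (mImage Φ A) ≤ ENNReal.ofReal ε)
    (x : X) (y : Y) (hy : (x, y) ∈ Φ) :
    mImage Φ (chainComp δ x) ⊆ chainComp ε y := by
  rintro y' ⟨a, ha, hay'⟩
  suffices H : ∀ a, Relation.ReflTransGen (fun a b => dist a b ≤ δ) x a →
      ∀ y', (a, y') ∈ Φ → y' ∈ chainComp ε y from H a ha y' hay'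
  intro a ha
  induction ha with
  | refl =>
    intro y' hy'
    have hdiam : EMetric.diam ({x} : Set X) ≤ ENNReal.ofReal δ := by
      simp [show EMetric.diam ({x} : Set X) = Metric.ediam {x} from rfl]
    have him := hosc {x} hdiam
    have h1 : y ∈ mImage Φ {x} := ⟨x, rfl, hy⟩
    have h2 : y' ∈ mImage Φ {x} := ⟨x, rfl, hy'⟩
    exact chain_step (le_trans (EMetric.edist_le_diam_of_mem h1 h2) him)
  | @tail b c hbc hstep ih =>
    intro y' hy'
    obtain ⟨yb, hyb⟩ := hdom b
    have hdiam : EMetric.diam ({b, c} : Set X) ≤ ENNReal.ofReal δ := by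
      rw [show EMetric.diam ({b, c} : Set X) = Metric.ediam {b, c} from rfl, Metric.ediam_pair, edist_dist]
      exact ENNReal.ofReal_le_ofReal hstep
    have him := hosc {b, c} hdiam
    have h1 : yb ∈ mImage Φ {b, c} := ⟨b, Or.inl rfl, hyb⟩
    have h2 : y' ∈ mImage Φ {b, c} := ⟨c, Or.inr rfl, hy'⟩
    exact (ih yb hyb).trans (chain_step (le_trans (EMetric.edist_le_diam_of_mem h1 h2) him))
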